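/- arXiv:2012.02385 — 3 statements merged into one kernel-verified Lean document; each statement's English description precedes it below -/
import Mathlib

section
/- (Jiang and Tanner, 1999) For each n ∈ ℕ, p ∈ [1,∞) and ε > 0, there exist soft-max gating parameters γ = (a_1,…,a_{n^d}, b_1,…,b_{n^d}) ∈ ℝ^{n^d} × (ℝ^d)^{n^d} such that sup_{k∈[n^d]} ( ∫_{[0,1]^d} | 1_{X_k^n}(x) − Gate_k(x;γ) |^p dλ(x) )^{1/p} ≤ ε, where 1_{X_k^n} is the indicator function of the cell X_k^n of the uniform partition of [0,1]^d. -/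
open MeasureTheory Filter Finset
open Topology

/-- Soft-max gating function with `K` components (index type `ι`) on `ℝ^d`:
`Gate_k(x) = exp(a_k + b_kᵀx) / Σ_l exp(a_l + b_lᵀx)`. -/
noncomputable def softmaxGate {ι : Type*} [Fintype ι] {d : ℕ}
    (a : ι → ℝ) (b : ι → Fin d → ℝ) (k : ι) (x : Fin d → ℝ) : ℝ :=
  Real.exp (a k + ∑ i, b k i * x i) / ∑ l, Real.exp (a l + ∑ i, b l i * x i)

/-- Soft-max gating function on `ℝ` (the case `d = 1`). -/
noncomputable def softmaxGate1 {ι : Type*} [Fintype ι]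
    (a b : ι → ℝ) (k : ι) (x : ℝ) : ℝ :=
  Real.exp (a k + b k * x) / ∑ l, Real.exp (a l + b l * x)

/-- Location-scale density `g_ψ(y; μ, σ) = σ^{-q} ψ((y - μ)/σ)` on `ℝ^q`. -/
noncomputable def locScale {q : ℕ} (ψ : (Fin q → ℝ) → ℝ)
    (μ : Fin q → ℝ) (σ : ℝ) (y : Fin q → ℝ) : ℝ :=
  (1 / σ ^ q) * ψ fun i => (y i - μ i) / σ

/-- Multivariate Gaussian density
`φ(x; ν, Σ) = det(2πΣ)^{-1/2} exp(-(x-ν)ᵀ Σ⁻¹ (x-ν) / 2)` on `ℝ^d`. -/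
noncomputable def gaussPDF {d : ℕ} (ν : Fin d → ℝ)
    (S : Matrix (Fin d) (Fin d) ℝ) (x : Fin d → ℝ) : ℝ :=
  (Real.sqrt ((2 * Real.pi) ^ d * S.det))⁻¹ *
    Real.exp (-dotProduct (fun i => x i - ν i) (Matrix.mulVec S⁻¹ fun i => x i - ν i) / 2)

/-- The unit cube `[0,1]^d`. -/
def unitCube (d : ℕ) : Set (Fin d → ℝ) := {x | ∀ i, x i ∈ Set.Icc (0 : ℝ) 1}

/-- The `j`-th interval of the uniform partition of `[0,1]` into `n` pieces:
`[j/n, (j+1)/n)` for `j + 1 < n`, and `[(n-1)/n, 1]` for the last one. -/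
def unifInterval (n : ℕ) (j : Fin n) : Set ℝ :=
  if (j : ℕ) + 1 = n then Set.Icc ((j : ℝ) / n) 1
  else Set.Ico ((j : ℝ) / n) (((j : ℝ) + 1) / n)

/-- The cell `X_k^n = ∏_i I_{k_i}^n` of the uniform partition of `[0,1]^d`,
indexed by `k : Fin d → Fin n`. -/
def unifCell (d n : ℕ) (k : Fin d → Fin n) : Set (Fin d → ℝ) :=
  {x | ∀ i, x i ∈ unifInterval n (k i)}


noncomputable def cJT (n j : ℕ) : ℝ := j * (j + 1) / (2 * n)

noncomputable def LJT {d : ℕ} (n : ℕ) (k : Fin d → Fin n) (x : Fin d → ℝ) : ℝ :=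
  ∑ i, ((k i : ℝ) * x i - cJT n (k i))

lemma ell_lt {n : ℕ} (hn : 0 < n) (m j : Fin n) (hj : j ≠ m) {t : ℝ}
    (ht : (m : ℝ) / n < t) (ht' : t < ((m : ℝ) + 1) / n) :
    (j : ℝ) * t - cJT n j < (m : ℝ) * t - cJT n m := by
  have hn' : (0 : ℝ) < n := by exact_mod_cast hn
  have key : ((m : ℝ) * t - cJT n m) - ((j : ℝ) * t - cJT n j)
      = ((m : ℝ) - j) * (t - ((m : ℝ) + j + 1) / (2 * n)) := by
    unfold cJT; field_simp; ring
  have hjm : (j : ℕ) ≠ (m : ℕ) := fun h => hj (Fin.ext h)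
  rcases hjm.lt_or_gt with h | h
  · have hc : (j : ℝ) + 1 ≤ m := by exact_mod_cast h
    have h2 : ((m : ℝ) + j + 1) / (2 * n) ≤ (m : ℝ) / n := by
      rw [div_le_div_iff₀ (by positivity) hn']; nlinarith
    nlinarith [key]
  · have hc : (m : ℝ) + 1 ≤ j := by exact_mod_cast h
    have h2 : ((m : ℝ) + 1) / n ≤ ((m : ℝ) + j + 1) / (2 * n) := by
      rw [div_le_div_iff₀ hn' (by positivity)]; nlinarith
    nlinarith [key]

noncomputable def gateJT {d : ℕ} (n s : ℕ) (k : Fin d → Fin n) (x : Fin d → ℝ) : ℝ :=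
  Real.exp ((s : ℝ) * LJT n k x) / ∑ l, Real.exp ((s : ℝ) * LJT n l x)

lemma gateJT_den_pos {d n : ℕ} [Nonempty (Fin n)] (s : ℕ) (x : Fin d → ℝ) :
    (0 : ℝ) < ∑ l : Fin d → Fin n, Real.exp ((s : ℝ) * LJT n l x) :=
  Finset.sum_pos (fun l _ => Real.exp_pos _) Finset.univ_nonempty

lemma gateJT_nonneg {d n : ℕ} [Nonempty (Fin n)] (s : ℕ) (k : Fin d → Fin n) (x : Fin d → ℝ) :
    0 ≤ gateJT n s k x := by
  unfold gateJT
  exact div_nonneg (Real.exp_pos _).le (gateJT_den_pos s x).le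

lemma gateJT_le_one {d n : ℕ} [Nonempty (Fin n)] (s : ℕ) (k : Fin d → Fin n) (x : Fin d → ℝ) :
    gateJT n s k x ≤ 1 := by
  unfold gateJT
  rw [div_le_one (gateJT_den_pos s x)]
  exact Finset.single_le_sum (f := fun l : Fin d → Fin n => Real.exp ((s : ℝ) * LJT n l x))
    (fun l _ => (Real.exp_pos _).le) (Finset.mem_univ k)

lemma gateJT_continuous {d n : ℕ} [Nonempty (Fin n)] (s : ℕ) (k : Fin d → Fin n) :
    Continuous (gateJT n s k) := by
  have hLcont : ∀ m : Fin d → Fin n, Continuous fun x : Fin d → ℝ =>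
      Real.exp ((s : ℝ) * LJT n m x) := by
    intro m
    refine Real.continuous_exp.comp (continuous_const.mul ?_)
    unfold LJT
    exact continuous_finset_sum _ fun i _ =>
      (continuous_const.mul (continuous_apply i)).sub continuous_const
  refine Continuous.div (hLcont k) (continuous_finset_sum _ fun l _ => hLcont l) ?_
  intro x; exact (gateJT_den_pos s x).ne'

lemma gateJT_eq {d n : ℕ} (s : ℕ) (k : Fin d → Fin n) (x : Fin d → ℝ) :
    softmaxGate (fun k => (s : ℝ) * (-(∑ i, cJT n (k i))))
      (fun k i => (s : ℝ) * (k i : ℝ)) k x = gateJT n s k x := by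
  have harg : ∀ m : Fin d → Fin n,
      (s : ℝ) * (-(∑ i, cJT n (m i))) + ∑ i, ((s : ℝ) * (m i : ℝ)) * x i
        = (s : ℝ) * LJT n m x := by
    intro m
    unfold LJT
    rw [Finset.sum_sub_distrib]
    simp only [mul_assoc]
    rw [← Finset.mul_sum]
    ring
  simp only [softmaxGate, gateJT, harg]

open Topology in
lemma gate_tendsto {d n : ℕ} [Nonempty (Fin d → Fin n)] (k k₀ : Fin d → Fin n) (x : Fin d → ℝ)
    (hmax : ∀ l, l ≠ k₀ → LJT n l x < LJT n k₀ x) :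
    Tendsto (fun s : ℕ => gateJT n s k x)
      atTop (𝓝 (if k = k₀ then 1 else 0)) := by
  unfold gateJT
  have hexp_lim : ∀ m : Fin d → Fin n,
      Tendsto (fun s : ℕ => Real.exp ((s : ℝ) * (LJT n m x - LJT n k₀ x))) atTop
        (𝓝 (if m = k₀ then 1 else 0)) := by
    intro m
    by_cases hm : m = k₀
    · simp [hm]
    · simp only [hm, if_neg, if_false]
      have hc : LJT n m x - LJT n k₀ x < 0 := sub_neg.2 (hmax m hm)
      have h1 : Tendsto (fun s : ℕ => (s : ℝ) * (LJT n m x - LJT n k₀ x)) atTop atBot :=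
        (tendsto_natCast_atTop_atTop (R := ℝ)).atTop_mul_const_of_neg hc
      exact Real.tendsto_exp_atBot.comp h1
  have hrw : ∀ s : ℕ, Real.exp ((s : ℝ) * LJT n k x) / ∑ l, Real.exp ((s : ℝ) * LJT n l x)
      = Real.exp ((s : ℝ) * (LJT n k x - LJT n k₀ x))
        / ∑ l, Real.exp ((s : ℝ) * (LJT n l x - LJT n k₀ x)) := by
    intro s
    have he : ∀ m : Fin d → Fin n, Real.exp ((s : ℝ) * (LJT n m x - LJT n k₀ x))
        = Real.exp ((s : ℝ) * LJT n m x) / Real.exp ((s : ℝ) * LJT n k₀ x) := by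
      intro m; rw [← Real.exp_sub]; ring_nf
    simp only [he, ← Finset.sum_div]
    rw [div_div_div_cancel_right₀]
    exact Real.exp_ne_zero _
  simp only [hrw]
  have hden : Tendsto (fun s : ℕ => ∑ l, Real.exp ((s : ℝ) * (LJT n l x - LJT n k₀ x))) atTop
      (𝓝 1) := by
    have := tendsto_finset_sum Finset.univ (fun l (_ : l ∈ Finset.univ) => hexp_lim l)
    simpa using this
  have := (hexp_lim k).div hden one_ne_zero
  simpa [Pi.div_def] using this


lemma unifInterval_subset_Icc {n : ℕ} (hn : 0 < n) (j : Fin n) :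
    unifInterval n j ⊆ Set.Icc ((j : ℝ) / n) (((j : ℝ) + 1) / n) := by
  unfold unifInterval
  split_ifs with h
  · have : ((j : ℝ) + 1) / n = 1 := by
      rw [div_eq_one_iff_eq (by exact_mod_cast hn.ne')]
      exact_mod_cast h
    rw [this]
  · exact Set.Ico_subset_Icc_self

lemma mem_unifInterval_of_Ioo {n : ℕ} (hn : 0 < n) (m : Fin n) {t : ℝ}
    (ht : t ∈ Set.Ioo ((m : ℝ) / n) (((m : ℝ) + 1) / n)) : t ∈ unifInterval n m := by
  have hn' : (0 : ℝ) < n := by exact_mod_cast hn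
  unfold unifInterval
  split_ifs with h
  · refine ⟨ht.1.le, ?_⟩
    have : ((m : ℝ) + 1) / n = 1 := by
      rw [div_eq_one_iff_eq (by exact_mod_cast hn.ne')]
      exact_mod_cast h
    rw [← this]; exact ht.2.le
  · exact ⟨ht.1.le, ht.2⟩

lemma unifInterval_eq_of_Ioo {n : ℕ} (hn : 0 < n) (j m : Fin n) {t : ℝ}
    (h1 : t ∈ unifInterval n j) (h2 : t ∈ Set.Ioo ((m : ℝ) / n) (((m : ℝ) + 1) / n)) :
    j = m := by
  have hn' : (0 : ℝ) < n := by exact_mod_cast hn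
  have h1' := unifInterval_subset_Icc hn j h1
  have ha : (j : ℝ) / n < ((m : ℝ) + 1) / n := lt_of_le_of_lt h1'.1 h2.2
  have hb : (m : ℝ) / n < ((j : ℝ) + 1) / n := lt_of_lt_of_le h2.1 h1'.2
  rw [div_lt_div_iff_of_pos_right hn'] at ha hb
  have hjm : (j : ℕ) < m + 1 := by exact_mod_cast ha
  have hmj : (m : ℕ) < j + 1 := by exact_mod_cast hb
  exact Fin.ext (by omega)

lemma exists_good_cell {d n : ℕ} (hn : 0 < n) (x : Fin d → ℝ) (hx : x ∈ unitCube d)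
    (hE : ∀ i, ∀ j : ℕ, j ≤ n → x i ≠ (j : ℝ) / n) :
    ∃ k₀ : Fin d → Fin n, ∀ i, x i ∈ Set.Ioo ((k₀ i : ℝ) / n) (((k₀ i : ℝ) + 1) / n) := by
  have hn' : (0 : ℝ) < n := by exact_mod_cast hn
  have hkey : ∀ i, ∃ m : Fin n, x i ∈ Set.Ioo ((m : ℝ) / n) (((m : ℝ) + 1) / n) := by
    intro i
    have h0 : 0 ≤ x i := (hx i).1
    have h1 : x i ≤ 1 := (hx i).2
    have hne0 : x i ≠ 0 := by
      have := hE i 0 (Nat.zero_le n); simpa using this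
    have hne1 : x i ≠ 1 := by
      have := hE i n le_rfl
      rwa [div_self hn'.ne'] at this
    have h0' : 0 < x i := lt_of_le_of_ne h0 (Ne.symm hne0)
    have h1' : x i < 1 := lt_of_le_of_ne h1 hne1
    set m : ℕ := ⌊x i * n⌋₊ with hm
    have hmn : m < n := by
      rw [hm, Nat.floor_lt (by positivity)]
      calc x i * n < 1 * n := by exact mul_lt_mul_of_pos_right h1' hn'
        _ = n := one_mul _
    refine ⟨⟨m, hmn⟩, ?_, ?_⟩
    · have hle : (m : ℝ) ≤ x i * n := Nat.floor_le (by positivity)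
      have hne : x i * n ≠ (m : ℝ) := by
        intro hcon
        exact hE i m hmn.le (by field_simp [eq_div_iff hn'.ne']; linarith [hcon])
      have : (m : ℝ) < x i * n := lt_of_le_of_ne hle (Ne.symm hne)
      rw [div_lt_iff₀ hn']
      simpa using this
    · have : x i * n < (m : ℝ) + 1 := Nat.lt_floor_add_one _
      rw [lt_div_iff₀ hn']
      simpa using this
  choose k₀ hk₀ using hkey
  exact ⟨k₀, hk₀⟩

/-- Jiang and Tanner, 1999: soft-max gates can approximate the indicator
functions of the cells of the uniform partition of `[0,1]^d` into `n^d` cells, uniformly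
over all cells, in `L^p` norm on `[0,1]^d`. The cells are indexed by `k : Fin d → Fin n`. -/
theorem softmax_gate_approximates_indicators {d : ℕ} (n : ℕ) (hn : 0 < n)
    (p : ℝ) (hp : 1 ≤ p) (ε : ℝ) (hε : 0 < ε) :
    ∃ (a : (Fin d → Fin n) → ℝ) (b : (Fin d → Fin n) → Fin d → ℝ),
      ∀ k : Fin d → Fin n,
        (∫ x in unitCube d,
            |Set.indicator (unifCell d n k) (fun _ => (1 : ℝ)) x - softmaxGate a b k x| ^ p)
          ^ (1 / p) ≤ ε := by
  haveI : Nonempty (Fin n) := ⟨⟨0, hn⟩⟩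
  have hp0 : (0 : ℝ) < p := lt_of_lt_of_le one_pos hp
  have hn' : (0 : ℝ) < n := by exact_mod_cast hn
  -- measurability of the sets involved
  have hcube_meas : MeasurableSet (unitCube d) := by
    have : unitCube d = Set.pi Set.univ (fun _ : Fin d => Set.Icc (0 : ℝ) 1) := by
      ext x; simp only [unitCube, Set.mem_setOf_eq, Set.mem_univ_pi]
    rw [this]; exact MeasurableSet.univ_pi fun i => measurableSet_Icc
  have hcell_meas : ∀ k : Fin d → Fin n, MeasurableSet (unifCell d n k) := by
    intro k
    have : unifCell d n k = Set.pi Set.univ (fun i => unifInterval n (k i)) := by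
      ext x; simp only [unifCell, Set.mem_setOf_eq, Set.mem_univ_pi]
    rw [this]
    refine MeasurableSet.univ_pi fun i => ?_
    unfold unifInterval
    split_ifs
    exacts [measurableSet_Icc, measurableSet_Ico]
  haveI : IsFiniteMeasure (volume.restrict (unitCube d)) := by
    constructor
    rw [Measure.restrict_apply_univ]
    have hsub : unitCube d ⊆ Set.pi Set.univ (fun _ : Fin d => Set.Icc (0 : ℝ) 1) := by
      intro x hx i _; exact hx i
    calc volume (unitCube d)
        ≤ volume (Set.pi Set.univ (fun _ : Fin d => Set.Icc (0 : ℝ) 1)) := measure_mono hsub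
      _ = ∏ _i : Fin d, volume (Set.Icc (0 : ℝ) 1) := volume_pi_pi _
      _ < ⊤ := by simp
  have hind01 : ∀ (k : Fin d → Fin n) (x : Fin d → ℝ),
      0 ≤ Set.indicator (unifCell d n k) (fun _ => (1 : ℝ)) x ∧
        Set.indicator (unifCell d n k) (fun _ => (1 : ℝ)) x ≤ 1 := by
    intro k x
    classical
    rw [Set.indicator_apply]
    split_ifs <;> norm_num
  -- convergence of the integrals via dominated convergence
  have htend : ∀ k : Fin d → Fin n,
      Tendsto (fun s : ℕ => ∫ x in unitCube d,
        |Set.indicator (unifCell d n k) (fun _ => (1 : ℝ)) x - gateJT n s k x| ^ p)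
        atTop (𝓝 0) := by
    intro k
    have h0 : (0 : ℝ) = ∫ (_ : Fin d → ℝ) in unitCube d, (0 : ℝ) := by simp
    rw [h0]
    apply tendsto_integral_of_dominated_convergence (bound := fun _ => (1 : ℝ))
    · -- measurability
      intro s
      refine Measurable.aestronglyMeasurable ?_
      exact (((measurable_const.indicator (hcell_meas k)).sub
        (gateJT_continuous s k).measurable).abs).pow_const p
    · exact integrable_const 1
    · -- uniform bound
      intro s
      refine Filter.Eventually.of_forall fun x => ?_
      have hb : |Set.indicator (unifCell d n k) (fun _ => (1 : ℝ)) x - gateJT n s k x| ≤ 1 := by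
        rw [abs_le]
        constructor
        · linarith [(hind01 k x).1, gateJT_le_one s k x]
        · linarith [(hind01 k x).2, gateJT_nonneg s k x]
      have hle1 : |Set.indicator (unifCell d n k) (fun _ => (1 : ℝ)) x - gateJT n s k x| ^ p ≤ 1 :=
        Real.rpow_le_one (abs_nonneg _) hb hp0.le
      have h0' : 0 ≤ |Set.indicator (unifCell d n k) (fun _ => (1 : ℝ)) x - gateJT n s k x| ^ p :=
        Real.rpow_nonneg (abs_nonneg _) p
      rw [Real.norm_eq_abs, abs_of_nonneg h0']
      exact hle1
    · -- ae convergence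
      have hnullE : volume {x : Fin d → ℝ | ∃ i : Fin d, ∃ j : Fin (n + 1), x i = (j : ℝ) / n}
          = 0 := by
        refine measure_mono_null (fun x hx => ?_)
          (measure_iUnion_null fun i : Fin d => measure_iUnion_null fun j : Fin (n + 1) =>
            (?_ : volume {x : Fin d → ℝ | x i = (j : ℝ) / n} = 0))
        · obtain ⟨i, j, hij⟩ := hx
          exact Set.mem_iUnion.2 ⟨i, Set.mem_iUnion.2 ⟨j, hij⟩⟩
        · rw [volume_pi]
          exact MeasureTheory.Measure.pi_hyperplane _ i _
      have hae1 : ∀ᵐ x ∂(volume.restrict (unitCube d)),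
          ¬ ∃ i : Fin d, ∃ j : Fin (n + 1), x i = (j : ℝ) / n :=
        ae_restrict_of_ae (measure_eq_zero_iff_ae_notMem.1 hnullE)
      have hae2 : ∀ᵐ x ∂(volume.restrict (unitCube d)), x ∈ unitCube d :=
        ae_restrict_mem hcube_meas
      filter_upwards [hae1, hae2] with x hxE hxc
      -- locate the cell of x
      obtain ⟨k₀, hk₀⟩ := exists_good_cell hn x hxc (fun i j hj hcon =>
        hxE ⟨i, ⟨j, Nat.lt_succ_of_le hj⟩, by simpa using hcon⟩)
      have hmax : ∀ l, l ≠ k₀ → LJT n l x < LJT n k₀ x := by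
        intro l hl
        unfold LJT
        refine Finset.sum_lt_sum (fun i _ => ?_) ?_
        · by_cases hi : l i = k₀ i
          · rw [hi]
          · exact (ell_lt hn (k₀ i) (l i) hi (hk₀ i).1 (hk₀ i).2).le
        · obtain ⟨i, hi⟩ := Function.ne_iff.1 hl
          exact ⟨i, Finset.mem_univ i, ell_lt hn (k₀ i) (l i) hi (hk₀ i).1 (hk₀ i).2⟩
      have hind : Set.indicator (unifCell d n k) (fun _ => (1 : ℝ)) x
          = if k = k₀ then 1 else 0 := by
        by_cases hk : k = k₀
        · subst hk
          rw [if_pos rfl, Set.indicator_of_mem]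
          exact fun i => mem_unifInterval_of_Ioo hn (k i) (hk₀ i)
        · rw [if_neg hk, Set.indicator_of_notMem]
          intro hmem
          exact hk (funext fun i => unifInterval_eq_of_Ioo hn (k i) (k₀ i) (hmem i) (hk₀ i))
      have hg := gate_tendsto k k₀ x hmax
      have hdiff : Tendsto (fun s : ℕ =>
          |Set.indicator (unifCell d n k) (fun _ => (1 : ℝ)) x - gateJT n s k x|) atTop (𝓝 0) := by
        rw [hind]
        have := (tendsto_const_nhds (x := if k = k₀ then (1 : ℝ) else 0)
          (f := atTop (α := ℕ))).sub hg
        simpa using this.abs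
      have hcont0 : ContinuousAt (fun y : ℝ => y ^ p) 0 :=
        Real.continuousAt_rpow_const 0 p (Or.inr hp0.le)
      have hcomp := hcont0.tendsto.comp hdiff
      simp only [Function.comp_def] at hcomp
      rw [Real.zero_rpow hp0.ne'] at hcomp
      exact hcomp
  -- pick a large enough s, uniformly in k
  have hεp : (0 : ℝ) < ε ^ p := Real.rpow_pos_of_pos hε p
  have heps : ∀ᶠ s : ℕ in atTop, ∀ k : Fin d → Fin n,
      (∫ x in unitCube d,
        |Set.indicator (unifCell d n k) (fun _ => (1 : ℝ)) x - gateJT n s k x| ^ p) ≤ ε ^ p :=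
    eventually_all.2 fun k => (htend k).eventually (eventually_le_nhds hεp)
  obtain ⟨s, hs⟩ := heps.exists
  refine ⟨fun k => (s : ℝ) * (-(∑ i, cJT n (k i))), fun k i => (s : ℝ) * (k i : ℝ), fun k => ?_⟩
  have hint_eq : (∫ x in unitCube d,
      |Set.indicator (unifCell d n k) (fun _ => (1 : ℝ)) x -
        softmaxGate (fun k => (s : ℝ) * (-(∑ i, cJT n (k i))))
          (fun k i => (s : ℝ) * (k i : ℝ)) k x| ^ p)
      = ∫ x in unitCube d,
        |Set.indicator (unifCell d n k) (fun _ => (1 : ℝ)) x - gateJT n s k x| ^ p := by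
    refine integral_congr_ae (Filter.Eventually.of_forall fun x => ?_)
    simp only [gateJT_eq]
  rw [hint_eq]
  have hint_nonneg : 0 ≤ ∫ x in unitCube d,
      |Set.indicator (unifCell d n k) (fun _ => (1 : ℝ)) x - gateJT n s k x| ^ p :=
    integral_nonneg fun x => Real.rpow_nonneg (abs_nonneg _) p
  have hle := Real.rpow_le_rpow hint_nonneg (hs k) (by positivity : (0 : ℝ) ≤ 1 / p)
  rwa [← Real.rpow_mul hε.le, mul_one_div_cancel hp0.ne', Real.rpow_one] at hle
end

section
/- Let X = [0,1]. For each n ∈ ℕ there exists a sequence of soft-max gating parameter vectors {γ_l}_{l∈ℕ} ⊂ ℝ^n × ℝ^n such that, as l → ∞, Gate_k(·;γ_l) converges to the indicator function 1_{I_k^n} almost uniformly on [0,1], simultaneously for all k ∈ [n]: for every δ > 0 there exists a measurable set B ⊂ [0,1] with λ(B) < δ such that for every k ∈ [n], Gate_k(·;γ_l) → 1_{I_k^n} uniformly on [0,1] ∖ B. -/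
open MeasureTheory Filter Finset
open Topology

lemma unifInterval_lb {n : ℕ} {k : Fin n} {x : ℝ} (h : x ∈ unifInterval n k) :
    ((k : ℕ) : ℝ) / n ≤ x := by
  unfold unifInterval at h
  split_ifs at h with hc
  · exact h.1
  · exact h.1

lemma unifInterval_ub {n : ℕ} {k : Fin n} {x : ℝ} (hc : (k : ℕ) + 1 ≠ n)
    (h : x ∈ unifInterval n k) : x < (((k : ℕ) : ℝ) + 1) / n := by
  unfold unifInterval at h
  rw [if_neg hc] at h
  exact h.2

lemma unifInterval_unique {n : ℕ} {j k : Fin n} {x : ℝ}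
    (hj : x ∈ unifInterval n j) (hk : x ∈ unifInterval n k) : j = k := by
  by_contra hne
  have hn0 : (0 : ℝ) < n := by exact_mod_cast j.pos
  rcases Nat.lt_trichotomy (j : ℕ) (k : ℕ) with h | h | h
  · have h1 := unifInterval_ub (by have := k.isLt; omega) hj
    have h2 := unifInterval_lb hk
    have hc : ((j : ℕ) : ℝ) + 1 ≤ ((k : ℕ) : ℝ) := by exact_mod_cast h
    have : (((j:ℕ):ℝ) + 1) / n ≤ ((k:ℕ):ℝ) / n := by gcongr
    linarith
  · exact hne (Fin.ext h)
  · have h1 := unifInterval_ub (by have := j.isLt; omega) hk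
    have h2 := unifInterval_lb hj
    have hc : ((k : ℕ) : ℝ) + 1 ≤ ((j : ℕ) : ℝ) := by exact_mod_cast h
    have : (((k:ℕ):ℝ) + 1) / n ≤ ((j:ℕ):ℝ) / n := by gcongr
    linarith

lemma exists_unifInterval {n : ℕ} (hn : 0 < n) {x : ℝ} (hx : x ∈ Set.Icc (0:ℝ) 1) :
    ∃ k : Fin n, x ∈ unifInterval n k := by
  obtain ⟨hx0, hx1⟩ := hx
  have hn0 : (0 : ℝ) < n := by exact_mod_cast hn
  by_cases h1 : x = 1
  · refine ⟨⟨n - 1, by omega⟩, ?_⟩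
    unfold unifInterval
    rw [if_pos (by simp; omega)]
    subst h1
    constructor
    · have : ((n - 1 : ℕ) : ℝ) ≤ (n : ℝ) := by exact_mod_cast Nat.sub_le n 1
      rw [div_le_one hn0]
      simpa using this
    · exact le_refl 1
  · have hx1' : x < 1 := lt_of_le_of_ne hx1 h1
    have hmn : ⌊(n : ℝ) * x⌋₊ < n := by
      rw [Nat.floor_lt (by positivity)]
      nlinarith
    refine ⟨⟨⌊(n : ℝ) * x⌋₊, hmn⟩, ?_⟩
    have hfl : ((⌊(n : ℝ) * x⌋₊ : ℕ) : ℝ) ≤ (n : ℝ) * x := Nat.floor_le (by positivity)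
    have hfu : (n : ℝ) * x < (⌊(n : ℝ) * x⌋₊ : ℝ) + 1 := Nat.lt_floor_add_one _
    unfold unifInterval
    by_cases hc : ⌊(n : ℝ) * x⌋₊ + 1 = n
    · rw [if_pos (by simpa using hc)]
      exact ⟨by rw [div_le_iff₀ hn0]; linarith, hx1⟩
    · rw [if_neg (by simpa using hc)]
      exact ⟨by rw [div_le_iff₀ hn0]; linarith, by rw [lt_div_iff₀ hn0]; linarith⟩

lemma aux_gap_left {nR jR kR x ε : ℝ} (hjk : jR + 1 ≤ kR)
    (hε : 0 ≤ nR * ε) (hx : kR + nR * ε ≤ nR * x) :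
    2*nR*jR*x - jR*(jR+1) + 2*(nR*ε) ≤ 2*nR*kR*x - kR*(kR+1) := by
  nlinarith [mul_nonneg (by linarith : (0:ℝ) ≤ kR - jR) (by linarith : (0:ℝ) ≤ nR*x - kR - nR*ε),
             mul_nonneg (by linarith : (0:ℝ) ≤ kR - jR - 1) (by linarith : (0:ℝ) ≤ kR - jR),
             mul_nonneg hε (by linarith : (0:ℝ) ≤ kR - jR - 1)]

lemma aux_gap_right {nR jR kR x ε : ℝ} (hjk : kR + 1 ≤ jR)
    (hε : 0 ≤ nR * ε) (hx : nR * x ≤ kR + 1 - nR * ε) :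
    2*nR*jR*x - jR*(jR+1) + 2*(nR*ε) ≤ 2*nR*kR*x - kR*(kR+1) := by
  nlinarith [mul_nonneg (by linarith : (0:ℝ) ≤ jR - kR) (by linarith : (0:ℝ) ≤ kR + 1 - nR*ε - nR*x),
             mul_nonneg (by linarith : (0:ℝ) ≤ jR - kR - 1) (by linarith : (0:ℝ) ≤ jR - kR),
             mul_nonneg hε (by linarith : (0:ℝ) ≤ jR - kR - 1)]

/-- For each `n`, there is a sequence of soft-max gating parameter vectors
on `ℝ` whose gates converge almost uniformly on `[0,1]` to the indicators of the intervals
of the uniform partition of `[0,1]` into `n` pieces, simultaneously for all `k ∈ [n]`. -/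
theorem softmax_gate_almost_uniform_indicators (n : ℕ) (hn : 0 < n) :
    ∃ a b : ℕ → Fin n → ℝ,
      ∀ δ : ℝ, 0 < δ →
        ∃ B : Set ℝ, B ⊆ Set.Icc (0 : ℝ) 1 ∧ MeasurableSet B ∧
          volume B < ENNReal.ofReal δ ∧
          ∀ k : Fin n,
            TendstoUniformlyOn (fun (l : ℕ) (x : ℝ) => softmaxGate1 (a l) (b l) k x)
              (Set.indicator (unifInterval n k) fun _ => (1 : ℝ)) atTop
              (Set.Icc (0 : ℝ) 1 \ B) := by
  classical
  refine ⟨fun l k => -((l : ℝ)) * (((k : ℕ) : ℝ) * (((k : ℕ) : ℝ) + 1)),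
          fun l k => (l : ℝ) * (2 * (n : ℝ) * ((k : ℕ) : ℝ)), ?_⟩
  intro δ hδ
  have hn0 : (0 : ℝ) < n := by exact_mod_cast hn
  have hn1 : (1 : ℝ) ≤ n := by exact_mod_cast hn
  set ε : ℝ := δ / (2 * (n : ℝ) + 2) with hεdef
  have hε : 0 < ε := by positivity
  set c : ℝ := 2 * ((n : ℝ) * ε) with hcdef
  have hc : 0 < c := by positivity
  set B : Set ℝ :=
      (⋃ j ∈ Finset.Ico 1 n, Set.Ioo ((j : ℝ) / n - ε) ((j : ℝ) / n + ε)) ∩ Set.Icc 0 1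
    with hBdef
  refine ⟨B, Set.inter_subset_right, ?_, ?_, ?_⟩
  · exact (MeasurableSet.biUnion (Finset.Ico 1 n).countable_toSet
      (fun _ _ => measurableSet_Ioo)).inter measurableSet_Icc
  · have h1 : volume B ≤ ∑ j ∈ Finset.Ico 1 n,
        volume (Set.Ioo ((j : ℝ) / n - ε) ((j : ℝ) / n + ε)) :=
      le_trans (measure_mono Set.inter_subset_left) (measure_biUnion_finset_le _ _)
    have h2 : ∀ j ∈ Finset.Ico 1 n,
        volume (Set.Ioo ((j : ℝ) / n - ε) ((j : ℝ) / n + ε)) = ENNReal.ofReal (2 * ε) := by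
      intro j _
      rw [Real.volume_Ioo]
      congr 1
      ring
    rw [Finset.sum_congr rfl h2, Finset.sum_const, Nat.card_Ico] at h1
    refine lt_of_le_of_lt h1 ?_
    rw [nsmul_eq_mul, ← ENNReal.ofReal_natCast, ← ENNReal.ofReal_mul (by positivity)]
    rw [ENNReal.ofReal_lt_ofReal_iff hδ]
    have hcast : ((n - 1 : ℕ) : ℝ) ≤ (n : ℝ) := by exact_mod_cast Nat.sub_le n 1
    calc ((n - 1 : ℕ) : ℝ) * (2 * ε) ≤ (n : ℝ) * (2 * ε) := by nlinarith
      _ < δ := by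
          rw [hεdef, show (n:ℝ) * (2 * (δ / (2 * (n:ℝ) + 2))) = 2 * (n:ℝ) * δ / (2 * (n:ℝ) + 2)
            by ring, div_lt_iff₀ (by positivity)]
          nlinarith
  · intro k
    rw [Metric.tendstoUniformlyOn_iff]
    intro ε' hε'
    have hlim : Tendsto (fun l : ℕ => (n : ℝ) * Real.exp (-((l : ℝ) * c))) atTop (𝓝 0) := by
      have h1 : Tendsto (fun l : ℕ => (l : ℝ) * c) atTop atTop :=
        (tendsto_natCast_atTop_atTop).atTop_mul_const hc
      have h2 : Tendsto (fun l : ℕ => Real.exp (-((l : ℝ) * c))) atTop (𝓝 0) :=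
        Real.tendsto_exp_atBot.comp (tendsto_neg_atTop_atBot.comp h1)
      simpa using h2.const_mul (n : ℝ)
    have hev : ∀ᶠ l : ℕ in atTop, (n : ℝ) * Real.exp (-((l : ℝ) * c)) < ε' :=
      hlim.eventually (gt_mem_nhds hε')
    filter_upwards [hev] with l hl
    intro x hx
    obtain ⟨hxI, hxB⟩ := hx
    obtain ⟨k0, hk0⟩ := exists_unifInterval hn hxI
    have hnotin : ∀ m : ℕ, m ∈ Finset.Ico 1 n →
        x ∉ Set.Ioo ((m : ℝ) / n - ε) ((m : ℝ) / n + ε) := by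
      intro m hm hmem
      exact hxB ⟨Set.mem_biUnion hm hmem, hxI⟩
    set s : Fin n → ℝ := fun j =>
      -((l : ℝ)) * (((j : ℕ) : ℝ) * (((j : ℕ) : ℝ) + 1)) +
        (l : ℝ) * (2 * (n : ℝ) * ((j : ℕ) : ℝ)) * x with hsdef
    have hgap : ∀ j : Fin n, j ≠ k0 → s j + (l : ℝ) * c ≤ s k0 := by
      intro j hj
      have hl0 : (0 : ℝ) ≤ (l : ℝ) := Nat.cast_nonneg l
      have hne : (j : ℕ) ≠ (k0 : ℕ) := fun h => hj (Fin.ext h)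
      have hεn : (0 : ℝ) ≤ (n : ℝ) * ε := by positivity
      rcases Nat.lt_or_ge (j : ℕ) (k0 : ℕ) with hlt | hge
      · -- j below k0 : need x ≥ k0/n + ε
        have hk0pos : 1 ≤ (k0 : ℕ) := by omega
        have hmem : (k0 : ℕ) ∈ Finset.Ico 1 n := Finset.mem_Ico.mpr ⟨hk0pos, k0.isLt⟩
        have hlow : ((k0 : ℕ) : ℝ) / n + ε ≤ x := by
          by_contra hcon
          push_neg at hcon
          exact hnotin (k0 : ℕ) hmem ⟨by linarith [unifInterval_lb hk0], hcon⟩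
        have hx2 : ((k0 : ℕ) : ℝ) + (n : ℝ) * ε ≤ (n : ℝ) * x := by
          have := (div_le_iff₀ hn0).mp (by linarith : ((k0 : ℕ) : ℝ) / n ≤ x - ε)
          nlinarith
        have hjk : ((j : ℕ) : ℝ) + 1 ≤ ((k0 : ℕ) : ℝ) := by exact_mod_cast hlt
        have hb := aux_gap_left hjk hεn hx2
        have := mul_le_mul_of_nonneg_left hb hl0
        simp only [hsdef, hcdef]
        nlinarith [this]
      · -- j above k0 : need x ≤ (k0+1)/n - ε
        have hlt' : (k0 : ℕ) < (j : ℕ) := by omega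
        have hk0top : (k0 : ℕ) + 1 ≠ n := by have := j.isLt; omega
        have hmem : (k0 : ℕ) + 1 ∈ Finset.Ico 1 n := by
          simp [Finset.mem_Ico]
          have := j.isLt; omega
        have hub := unifInterval_ub hk0top hk0
        have hhigh : x ≤ (((k0 : ℕ) : ℝ) + 1) / n - ε := by
          by_contra hcon
          push_neg at hcon
          refine hnotin ((k0 : ℕ) + 1) hmem ⟨?_, ?_⟩
          · push_cast
            linarith
          · push_cast
            linarith
        have hx2 : (n : ℝ) * x ≤ ((k0 : ℕ) : ℝ) + 1 - (n : ℝ) * ε := by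
          have := (le_div_iff₀ hn0).mp (by linarith : x + ε ≤ (((k0 : ℕ) : ℝ) + 1) / n)
          nlinarith
        have hjk : ((k0 : ℕ) : ℝ) + 1 ≤ ((j : ℕ) : ℝ) := by exact_mod_cast hlt'
        have hb := aux_gap_right hjk hεn hx2
        have := mul_le_mul_of_nonneg_left hb hl0
        simp only [hsdef, hcdef]
        nlinarith [this]
    -- softmax estimates
    have hgapE : ∀ j : Fin n, j ≠ k0 →
        Real.exp (s j) ≤ Real.exp (-((l : ℝ) * c)) * Real.exp (s k0) := by
      intro j hj
      rw [← Real.exp_add]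
      exact Real.exp_le_exp.mpr (by linarith [hgap j hj])
    have hD : 0 < ∑ j, Real.exp (s j) :=
      Finset.sum_pos (fun j _ => Real.exp_pos _) ⟨k0, Finset.mem_univ k0⟩
    have hED : Real.exp (s k0) ≤ ∑ j, Real.exp (s j) :=
      Finset.single_le_sum (fun j _ => (Real.exp_pos _).le) (Finset.mem_univ k0)
    have hgate : softmaxGate1
        (fun k : Fin n => -((l : ℝ)) * (((k : ℕ) : ℝ) * (((k : ℕ) : ℝ) + 1)))
        (fun k : Fin n => (l : ℝ) * (2 * (n : ℝ) * ((k : ℕ) : ℝ))) k x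
        = Real.exp (s k) / ∑ j, Real.exp (s j) := rfl
    by_cases hkk : k = k0
    · subst hkk
      have hind : Set.indicator (unifInterval n k) (fun _ => (1 : ℝ)) x = 1 :=
        Set.indicator_of_mem hk0 _
      rw [Real.dist_eq, hind, hgate]
      have hgle : Real.exp (s k) / (∑ j, Real.exp (s j)) ≤ 1 :=
        div_le_one_of_le₀ hED hD.le
      have hsum : (∑ j, Real.exp (s j)) - Real.exp (s k)
          = ∑ j ∈ Finset.univ.erase k, Real.exp (s j) := by
        rw [← Finset.add_sum_erase Finset.univ _ (Finset.mem_univ k)]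
        ring
      have hbd : ∑ j ∈ Finset.univ.erase k, Real.exp (s j)
          ≤ (n : ℝ) * Real.exp (-((l : ℝ) * c)) * Real.exp (s k) := by
        calc ∑ j ∈ Finset.univ.erase k, Real.exp (s j)
            ≤ ∑ _j ∈ Finset.univ.erase k, Real.exp (-((l : ℝ) * c)) * Real.exp (s k) :=
              Finset.sum_le_sum (fun j hj => hgapE j (Finset.ne_of_mem_erase hj))
          _ = ((Finset.univ.erase k).card : ℝ) * (Real.exp (-((l : ℝ) * c)) * Real.exp (s k)) := by
              rw [Finset.sum_const, nsmul_eq_mul]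
          _ ≤ (n : ℝ) * Real.exp (-((l : ℝ) * c)) * Real.exp (s k) := by
              have hcard : ((Finset.univ.erase k).card : ℝ) ≤ (n : ℝ) := by
                have h1 : (Finset.univ.erase k).card ≤ (Finset.univ : Finset (Fin n)).card :=
                  Finset.card_le_card (Finset.erase_subset _ _)
                have h2 : (Finset.univ : Finset (Fin n)).card = n := Finset.card_fin n
                exact_mod_cast h1.trans h2.le
              rw [mul_assoc]
              exact mul_le_mul_of_nonneg_right hcard (by positivity)
      have hfinal : 1 - Real.exp (s k) / (∑ j, Real.exp (s j))
          ≤ (n : ℝ) * Real.exp (-((l : ℝ) * c)) := by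
        have e1 : (1 : ℝ) - Real.exp (s k) / (∑ j, Real.exp (s j))
            = ((∑ j, Real.exp (s j)) - Real.exp (s k)) / (∑ j, Real.exp (s j)) := by
          rw [sub_div, div_self hD.ne']
        rw [e1, hsum, div_le_iff₀ hD]
        calc ∑ j ∈ Finset.univ.erase k, Real.exp (s j)
            ≤ (n : ℝ) * Real.exp (-((l : ℝ) * c)) * Real.exp (s k) := hbd
          _ ≤ (n : ℝ) * Real.exp (-((l : ℝ) * c)) * ∑ j, Real.exp (s j) :=
              mul_le_mul_of_nonneg_left hED (by positivity)
      rw [abs_of_nonneg (by linarith)]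
      linarith
    · have hxk : x ∉ unifInterval n k := fun h => hkk (unifInterval_unique h hk0)
      have hind : Set.indicator (unifInterval n k) (fun _ => (1 : ℝ)) x = 0 :=
        Set.indicator_of_notMem hxk _
      rw [Real.dist_eq, hind, hgate]
      have hgpos : 0 ≤ Real.exp (s k) / ∑ j, Real.exp (s j) :=
        div_nonneg (Real.exp_pos _).le hD.le
      rw [abs_of_nonpos (by linarith), neg_sub, sub_zero]
      have hle : Real.exp (s k) / (∑ j, Real.exp (s j)) ≤ Real.exp (-((l : ℝ) * c)) := by
        rw [div_le_iff₀ hD]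
        calc Real.exp (s k) ≤ Real.exp (-((l : ℝ) * c)) * Real.exp (s k0) := hgapE k hkk
          _ ≤ Real.exp (-((l : ℝ) * c)) * ∑ j, Real.exp (s j) :=
              mul_le_mul_of_nonneg_left hED (Real.exp_pos _).le
      have : Real.exp (-((l : ℝ) * c)) ≤ (n : ℝ) * Real.exp (-((l : ℝ) * c)) := by
        nlinarith [Real.exp_pos (-((l : ℝ) * c))]
      linarith
end

section
/- For each n ∈ ℕ there exists a sequence of soft-max gating parameter vectors {γ_l}_{l∈ℕ} ⊂ ℝ^n × ℝ^n such that for every k ∈ [n], Gate_k(x;γ_l) → 1_{I_k^n}(x) as l → ∞ for λ-almost every x ∈ [0,1], where 1_{I_k^n} is the indicator function of the interval I_k^n of the uniform partition of [0,1] into n intervals. -/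
open MeasureTheory Filter Finset

/-- For each `n`, there is a sequence of soft-max gating parameter vectors
on `ℝ` whose gates converge λ-almost everywhere on `[0,1]` to the indicators of the
intervals of the uniform partition of `[0,1]` into `n` pieces. -/
theorem softmax_gate_ae_indicators (n : ℕ) (hn : 0 < n) :
    ∃ a b : ℕ → Fin n → ℝ,
      ∀ k : Fin n,
        ∀ᵐ x ∂(volume.restrict (Set.Icc (0 : ℝ) 1)),
          Tendsto (fun l : ℕ => softmaxGate1 (a l) (b l) k x) atTop
            (nhds (Set.indicator (unifInterval n k) (fun _ => (1 : ℝ)) x)) := by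
  have hn' : (0:ℝ) < n := by exact_mod_cast hn
  refine ⟨fun l j => -(l:ℝ) * ((j:ℝ) * ((j:ℝ)+1) / (2*n)),
          fun l j => (l:ℝ) * (j:ℝ), ?_⟩
  intro k
  set g : Fin n → ℝ → ℝ := fun j x => (j:ℝ)*x - (j:ℝ)*((j:ℝ)+1)/(2*n) with hg
  -- a.e. x avoids the grid points j/n
  have hE : ∀ᵐ x ∂(volume.restrict (Set.Icc (0:ℝ) 1)),
      x ∉ Set.range (fun j : ℕ => (j:ℝ)/n) := by
    have h0 : (volume.restrict (Set.Icc (0:ℝ) 1)) (Set.range fun j:ℕ => (j:ℝ)/n) = 0 :=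
      le_antisymm (le_trans (Measure.restrict_apply_le _ _)
        (le_of_eq ((Set.countable_range _).measure_zero _))) zero_le
    rw [ae_iff]
    simpa only [not_not, Set.setOf_mem_eq] using h0
  filter_upwards [hE, ae_restrict_mem measurableSet_Icc] with x hxE hx
  obtain ⟨hx0, hx1⟩ := hx
  have hx1' : x < 1 := by
    rcases lt_or_eq_of_le hx1 with h | h
    · exact h
    · exact absurd ⟨n, show (n:ℝ)/(n:ℝ) = x by rw [div_self hn'.ne', h]⟩ hxE
  set m : ℕ := ⌊(n:ℝ) * x⌋₊ with hm
  have hmn : m < n := by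
    have : (n:ℝ) * x < n := by nlinarith
    exact_mod_cast Nat.floor_lt (by positivity) |>.mpr (by exact_mod_cast this)
  set k₀ : Fin n := ⟨m, hmn⟩ with hk₀
  have hfl : (m:ℝ) ≤ n * x := Nat.floor_le (by positivity)
  have hlow : (m:ℝ) < n * x := by
    rcases lt_or_eq_of_le hfl with h | h
    · exact h
    · exact absurd ⟨m, by rw [eq_comm] at h; field_simp; linarith⟩ hxE
  have hhigh : (n:ℝ) * x < m + 1 := Nat.lt_floor_add_one _
  -- strict max of g at k₀
  have hmax : ∀ j : Fin n, j ≠ k₀ → g j x < g k₀ x := by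
    intro j hj
    have hdiff : g k₀ x - g j x
        = (((m:ℝ)) - (j:ℝ)) * (2*(n:ℝ)*x - ((m:ℝ)+(j:ℝ)+1)) / (2*n) := by
      simp only [hg, hk₀]
      push_cast
      field_simp
      ring
    have hjm : (j:ℕ) ≠ m := fun h => hj (Fin.ext h)
    have key : 0 < (((m:ℝ)) - (j:ℝ)) * (2*(n:ℝ)*x - ((m:ℝ)+(j:ℝ)+1)) := by
      rcases lt_or_gt_of_ne hjm with h | h
      · have h' : ((j:ℕ):ℝ) + 1 ≤ m := by exact_mod_cast h
        nlinarith
      · have h' : ((m:ℝ)) + 1 ≤ ((j:ℕ):ℝ) := by exact_mod_cast h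
        nlinarith
    have := div_pos key (by positivity : (0:ℝ) < 2*n)
    linarith [hdiff ▸ this]
  -- membership of x in the partition intervals
  have hmem : x ∈ unifInterval n k₀ := by
    unfold unifInterval
    have h1 : ((k₀:ℕ):ℝ) / n ≤ x := by
      rw [div_le_iff₀ hn']
      simp only [hk₀]
      nlinarith
    split
    · exact ⟨h1, hx1⟩
    · refine ⟨h1, ?_⟩
      rw [lt_div_iff₀ hn']
      simp only [hk₀]
      push_cast
      nlinarith
  have hnmem : ∀ j : Fin n, j ≠ k₀ → x ∉ unifInterval n j := by
    intro j hj hxj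
    have hjm : (j:ℕ) ≠ m := fun h => hj (Fin.ext h)
    unfold unifInterval at hxj
    rcases lt_or_gt_of_ne hjm with h | h
    · -- j < m : x < (j+1)/n ≤ m/n < x
      have h' : ((j:ℕ):ℝ) + 1 ≤ m := by exact_mod_cast h
      have hle : ¬ ((j:ℕ) + 1 = n) := by omega
      rw [if_neg hle] at hxj
      have : x < ((j:ℝ)+1)/n := hxj.2
      rw [lt_div_iff₀ hn'] at this
      nlinarith
    · -- j > m : j/n ≥ (m+1)/n > x
      have h' : ((m:ℝ)) + 1 ≤ ((j:ℕ):ℝ) := by exact_mod_cast h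
      have hge : ((j:ℕ):ℝ)/n ≤ x := by
        by_cases hc : (j:ℕ) + 1 = n
        · rw [if_pos hc] at hxj; exact hxj.1
        · rw [if_neg hc] at hxj; exact hxj.1
      rw [div_le_iff₀ hn'] at hge
      nlinarith
  -- rewrite the gate
  have hrw : ∀ l : ℕ, softmaxGate1
      (fun j : Fin n => -(l:ℝ) * ((j:ℝ) * ((j:ℝ)+1) / (2*n)))
      (fun j : Fin n => (l:ℝ) * (j:ℝ)) k x
      = (∑ j : Fin n, Real.exp ((l:ℝ) * (g j x - g k x)))⁻¹ := by
    intro l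
    have key : ∀ j : Fin n, Real.exp (-(l:ℝ) * ((j:ℝ) * ((j:ℝ)+1) / (2*n)) + (l:ℝ) * (j:ℝ) * x)
        = Real.exp ((l:ℝ) * g k x) * Real.exp ((l:ℝ) * (g j x - g k x)) := by
      intro j
      rw [← Real.exp_add]
      congr 1
      simp only [hg]
      ring
    simp only [softmaxGate1, key, ← Finset.mul_sum]
    rw [mul_div_mul_left _ _ (Real.exp_ne_zero _), sub_self, mul_zero, Real.exp_zero, one_div]
  simp only [hrw]
  by_cases hkk : k = k₀
  · -- gate → 1
    have hmaxk : ∀ j : Fin n, j ≠ k → g j x < g k x := by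
      intro j hj
      rw [hkk]
      exact hmax j (by rw [hkk] at hj; exact hj)
    rw [Set.indicator_of_mem (show x ∈ unifInterval n k by rw [hkk]; exact hmem)]
    have hsum : Tendsto (fun l : ℕ => ∑ j : Fin n, Real.exp ((l:ℝ) * (g j x - g k x))) atTop
        (nhds 1) := by
      have h1 : (1:ℝ) = ∑ j : Fin n, (if j = k then (1:ℝ) else 0) := by simp
      rw [h1]
      refine tendsto_finset_sum _ (fun j _ => ?_)
      by_cases hj : j = k
      · subst hj; simp
      · simp only [if_neg hj]
        have hδ : g j x - g k x < 0 := sub_neg.mpr (hmaxk j hj)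
        exact Real.tendsto_exp_atBot.comp
          ((tendsto_natCast_atTop_atTop.atTop_mul_const_of_neg hδ))
    have := hsum.inv₀ one_ne_zero
    simpa using this
  · -- gate → 0
    rw [Set.indicator_of_notMem (hnmem k hkk)]
    have hδ : 0 < g k₀ x - g k x := sub_pos.mpr (hmax k hkk)
    have hsum : Tendsto (fun l : ℕ => ∑ j : Fin n, Real.exp ((l:ℝ) * (g j x - g k x))) atTop
        atTop := by
      refine tendsto_atTop_mono (fun l => ?_)
        (Real.tendsto_exp_atTop.comp (tendsto_natCast_atTop_atTop.atTop_mul_const hδ))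
      exact Finset.single_le_sum (f := fun j => Real.exp ((l:ℝ) * (g j x - g k x)))
        (fun j _ => (Real.exp_pos _).le) (Finset.mem_univ k₀)
    exact tendsto_inv_atTop_zero.comp hsum
end
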